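/- arXiv:2408.02449 — 5 statements merged into one kernel-verified Lean document; each statement's English description precedes it below -/
import Mathlib

section
/- Let λ ∈ ℝ and μ > 0. There exists a constant C > 0 (depending only on λ and μ) such that for all real a with |a| ≥ 1, ∫₀¹ s^λ φ(a/s^μ) ds ≤ C a^{-2} φ(a). -/
open MeasureTheory

noncomputable def phi (a : ℝ) : ℝ := (Real.sqrt (2 * Real.pi))⁻¹ * Real.exp (-a ^ 2 / 2)

/-- `s^λ ≤ N exp(s^{-2μ}/4)` on `(0,1]` for a suitable constant `N`. -/
lemma aux_rpow_le (lam μ : ℝ) (hμ : 0 < μ) :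
    ∃ N : ℝ, 0 < N ∧ ∀ s : ℝ, 0 < s → s ≤ 1 →
      s ^ lam ≤ N * Real.exp (s ^ (-(2*μ)) / 4) := by
  rcases le_or_gt 0 lam with hlam | hlam
  · refine ⟨1, one_pos, fun s hs hs1 => ?_⟩
    have h1 : s ^ lam ≤ 1 := Real.rpow_le_one hs.le hs1 hlam
    have h2 : (1:ℝ) ≤ Real.exp (s ^ (-(2*μ)) / 4) := by
      have : 0 < s ^ (-(2*μ)) := Real.rpow_pos_of_pos hs _
      exact Real.one_le_exp (by positivity)
    linarith
  · set p : ℝ := -lam / (2*μ) with hp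
    have hppos : 0 < p := by
      apply div_pos (by linarith) (by linarith)
    set n : ℕ := ⌈p⌉₊ with hn
    refine ⟨(4:ℝ) ^ p * (1 + (n.factorial : ℝ)), by positivity, fun s hs hs1 => ?_⟩
    set u : ℝ := s ^ (-(2*μ)) with hu
    have hu0 : 0 < u := Real.rpow_pos_of_pos hs _
    set y : ℝ := u / 4 with hy
    have hy0 : 0 < y := by positivity
    have h1 : s ^ lam = u ^ p := by
      rw [hu, ← Real.rpow_mul hs.le]
      congr 1
      have h2μ : (2*μ) ≠ 0 := by positivity
      rw [hp, mul_div_assoc', eq_div_iff h2μ]; ring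
    have h2 : u ^ p = (4:ℝ) ^ p * y ^ p := by
      rw [← Real.mul_rpow (by norm_num) hy0.le]
      congr 1
      rw [hy]; ring
    have h3 : y ^ p ≤ 1 + y ^ n := by
      rcases le_total y 1 with h | h
      · have := Real.rpow_le_one hy0.le h hppos.le
        have : (0:ℝ) ≤ y ^ n := by positivity
        linarith [Real.rpow_le_one hy0.le h hppos.le]
      · have h4 : y ^ p ≤ y ^ (n:ℝ) :=
          Real.rpow_le_rpow_of_exponent_le h (Nat.le_ceil p)
        rw [Real.rpow_natCast] at h4
        linarith
    have h5 : y ^ n ≤ (n.factorial : ℝ) * Real.exp y := by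
      have := Real.pow_div_factorial_le_exp (x := y) hy0.le n
      have hf : (0:ℝ) < (n.factorial : ℝ) := by positivity
      rw [div_le_iff₀ hf] at this
      linarith [this]
    have h6 : (1:ℝ) ≤ Real.exp y := Real.one_le_exp hy0.le
    have h7 : 1 + y ^ n ≤ (1 + (n.factorial : ℝ)) * Real.exp y := by nlinarith
    calc s ^ lam = (4:ℝ) ^ p * y ^ p := by rw [h1, h2]
      _ ≤ (4:ℝ) ^ p * (1 + y ^ n) := by
          have : (0:ℝ) < (4:ℝ) ^ p := by positivity
          nlinarith
      _ ≤ (4:ℝ) ^ p * ((1 + (n.factorial : ℝ)) * Real.exp y) := by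
          have : (0:ℝ) < (4:ℝ) ^ p := by positivity
          nlinarith
      _ = (4:ℝ) ^ p * (1 + (n.factorial : ℝ)) * Real.exp y := by ring

lemma key_bound (lam μ : ℝ) (hμ : 0 < μ) :
    ∃ K₁ K₂ : ℝ, 0 < K₁ ∧ 0 < K₂ ∧ ∀ a : ℝ, 1 ≤ a^2 → ∀ s : ℝ, 0 < s → s ≤ 1 →
      s ^ lam * phi (a / s ^ μ) ≤
        (Real.sqrt (2*Real.pi))⁻¹ * Real.exp (-a^2/2) *
          (K₁ * Real.exp (a^2*μ*(s-1)) + K₂ / a^2) := by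
  obtain ⟨N, hN, hNle⟩ := aux_rpow_le lam μ hμ
  have hc : (0:ℝ) < (2:ℝ) ^ (2*μ) - 1 := by
    have : (1:ℝ) < (2:ℝ) ^ (2*μ) :=
      Real.one_lt_rpow_iff_of_pos (by norm_num) |>.mpr (Or.inl ⟨by norm_num, by linarith⟩)
    linarith
  set c : ℝ := (2:ℝ) ^ (2*μ) - 1 with hcdef
  refine ⟨(2:ℝ) ^ |lam|, Real.exp (1/4) * N * 4 / c, by positivity, by positivity,
    fun a ha s hs hs1 => ?_⟩
  have ha0 : (0:ℝ) < a^2 := by linarith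
  set u : ℝ := s ^ (-(2*μ)) with hu
  have hu0 : 0 < u := Real.rpow_pos_of_pos hs _
  have hu1 : 1 ≤ u := Real.one_le_rpow_of_pos_of_le_one_of_nonpos hs hs1 (by linarith)
  -- rewrite phi
  have hsq : (a / s ^ μ)^2 = a^2 * u := by
    have h1 : (s ^ μ)^2 = s ^ (2*μ) := by
      rw [← Real.rpow_natCast (s ^ μ) 2, ← Real.rpow_mul hs.le]
      norm_num [mul_comm]
    rw [div_pow, h1, hu, Real.rpow_neg hs.le, div_eq_mul_inv]
  have hphi : phi (a / s ^ μ) =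
      (Real.sqrt (2*Real.pi))⁻¹ * (Real.exp (-a^2/2) * Real.exp (-(a^2*(u-1))/2)) := by
    rw [phi, hsq, ← Real.exp_add]
    congr 1
    ring
  have hsqrt : (0:ℝ) < (Real.sqrt (2*Real.pi))⁻¹ := by
    have := Real.pi_pos
    positivity
  -- Bernoulli: u - 1 ≥ 2μ(1-s)
  have hBern : 2*μ*(1-s) ≤ u - 1 := by
    have hlog : Real.log s ≤ s - 1 := Real.log_le_sub_one_of_pos hs
    have h1 : s ^ (2*μ) ≤ Real.exp (2*μ*(s-1)) := by
      rw [Real.rpow_def_of_pos hs]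
      exact Real.exp_le_exp.mpr (by nlinarith)
    have h2 : 1 + 2*μ*(1-s) ≤ Real.exp (2*μ*(1-s)) := by
      have := Real.add_one_le_exp (2*μ*(1-s)); linarith
    have hspos : (0:ℝ) < s ^ (2*μ) := Real.rpow_pos_of_pos hs _
    have h3 : s ^ (2*μ) * (1 + 2*μ*(1-s)) ≤ 1 := by
      calc s ^ (2*μ) * (1 + 2*μ*(1-s))
          ≤ Real.exp (2*μ*(s-1)) * Real.exp (2*μ*(1-s)) := by
            apply mul_le_mul h1 h2 (by nlinarith) (Real.exp_pos _).le
        _ = 1 := by rw [← Real.exp_add]; ring_nf; exact Real.exp_zero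
    have h4 : u = (s ^ (2*μ))⁻¹ := by
      rw [hu, Real.rpow_neg hs.le]
    have h5 : 1 + 2*μ*(1-s) ≤ u := by
      rw [h4]
      have hx := mul_inv_cancel₀ (ne_of_gt hspos)
      have h6 : s^(2*μ) * (1 + 2*μ*(1-s)) ≤ s^(2*μ) * (s^(2*μ))⁻¹ := by rw [hx]; exact h3
      exact le_of_mul_le_mul_left h6 hspos
    linarith
  rw [hphi]
  rcases le_or_gt s (1/2) with hhalf | hhalf
  · -- region near 0
    have huc : (2:ℝ) ^ (2*μ) ≤ u := by
      have h1 : ((1:ℝ)/2) ^ (-(2*μ)) ≤ s ^ (-(2*μ)) :=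
        Real.rpow_le_rpow_of_nonpos hs hhalf (by linarith)
      have h2 : ((1:ℝ)/2) ^ (-(2*μ)) = (2:ℝ) ^ (2*μ) := by
        rw [one_div, Real.inv_rpow (by norm_num), Real.rpow_neg (by norm_num), inv_inv]
      rw [h2] at h1; exact h1
    have hsplit : Real.exp (-(a^2*(u-1))/2)
        = Real.exp (-(a^2*(u-1))/4) * Real.exp (-(a^2*(u-1))/4) := by
      rw [← Real.exp_add]; congr 1; ring
    have hfac1 : Real.exp (-(a^2*(u-1))/4) ≤ Real.exp (-(u-1)/4) :=
      Real.exp_le_exp.mpr (by nlinarith)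
    have hfac2 : Real.exp (-(a^2*(u-1))/4) ≤ 4 / (c * a^2) := by
      have h1 : Real.exp (-(a^2*(u-1))/4) ≤ Real.exp (-(a^2*c)/4) :=
        Real.exp_le_exp.mpr (by nlinarith)
      have hx : (0:ℝ) < a^2*c/4 := by positivity
      have h2 : a^2*c/4 + 1 ≤ Real.exp (a^2*c/4) := Real.add_one_le_exp _
      have h3 : Real.exp (-(a^2*c)/4) = (Real.exp (a^2*c/4))⁻¹ := by
        rw [← Real.exp_neg]; congr 1; ring
      have h4 : (Real.exp (a^2*c/4))⁻¹ ≤ (a^2*c/4)⁻¹ := by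
        apply inv_anti₀ hx; linarith
      have h5 : (a^2*c/4)⁻¹ = 4/(c*a^2) := by field_simp
      rw [h3] at h1; rw [h5] at h4; linarith
    have hslam : s ^ lam * Real.exp (-(u-1)/4) ≤ N * Real.exp (1/4) := by
      have h1 := hNle s hs hs1
      have h2 : Real.exp (-(u-1)/4) = Real.exp (1/4) * Real.exp (-(u/4)) := by
        rw [← Real.exp_add]; congr 1; ring
      have h3 : (0:ℝ) < Real.exp (-(u/4)) := Real.exp_pos _
      calc s ^ lam * Real.exp (-(u-1)/4)
          ≤ (N * Real.exp (u/4)) * Real.exp (-(u-1)/4) := by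
            apply mul_le_mul_of_nonneg_right h1 (Real.exp_pos _).le
        _ = N * Real.exp (1/4) := by
            rw [mul_assoc, ← Real.exp_add, show u/4 + -(u-1)/4 = (1:ℝ)/4 by ring]
    have hmain : s ^ lam * Real.exp (-(a^2*(u-1))/2)
        ≤ (Real.exp (1/4) * N * 4 / c) / a^2 := by
      rw [hsplit]
      have hslam0 : (0:ℝ) ≤ s ^ lam := (Real.rpow_pos_of_pos hs _).le
      calc s ^ lam * (Real.exp (-(a^2*(u-1))/4) * Real.exp (-(a^2*(u-1))/4))
          ≤ s ^ lam * (Real.exp (-(u-1)/4) * (4/(c*a^2))) := by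
            apply mul_le_mul_of_nonneg_left _ hslam0
            apply mul_le_mul hfac1 hfac2 (Real.exp_pos _).le (Real.exp_pos _).le
        _ = (s ^ lam * Real.exp (-(u-1)/4)) * (4/(c*a^2)) := by ring
        _ ≤ (N * Real.exp (1/4)) * (4/(c*a^2)) := by
            apply mul_le_mul_of_nonneg_right hslam (by positivity)
        _ = (Real.exp (1/4) * N * 4 / c) / a^2 := by field_simp
    have hg1 : (0:ℝ) ≤ (2:ℝ) ^ |lam| * Real.exp (a^2*μ*(s-1)) := by positivity
    have hexp0 : (0:ℝ) < Real.exp (-a^2/2) := Real.exp_pos _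
    calc s ^ lam * ((Real.sqrt (2*Real.pi))⁻¹ * (Real.exp (-a^2/2) * Real.exp (-(a^2*(u-1))/2)))
        = (Real.sqrt (2*Real.pi))⁻¹ * Real.exp (-a^2/2) * (s ^ lam * Real.exp (-(a^2*(u-1))/2)) := by
          ring
      _ ≤ (Real.sqrt (2*Real.pi))⁻¹ * Real.exp (-a^2/2) * ((Real.exp (1/4) * N * 4 / c) / a^2) := by
          apply mul_le_mul_of_nonneg_left hmain (by positivity)
      _ ≤ _ := by
          apply mul_le_mul_of_nonneg_left _ (by positivity)
          linarith
  · -- region near 1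
    have hslam : s ^ lam ≤ (2:ℝ) ^ |lam| := by
      rcases le_or_gt 0 lam with hl | hl
      · have h1 : s ^ lam ≤ 1 := Real.rpow_le_one hs.le hs1 hl
        have h2 : (1:ℝ) ≤ (2:ℝ) ^ |lam| :=
          Real.one_le_rpow (by norm_num) (abs_nonneg _)
        linarith
      · have h1 : s ^ lam ≤ ((1:ℝ)/2) ^ lam :=
          Real.rpow_le_rpow_of_nonpos (by norm_num) hhalf.le hl.le
        have h2 : ((1:ℝ)/2) ^ lam = (2:ℝ) ^ (-lam) := by
          rw [one_div, Real.inv_rpow (by norm_num), ← Real.rpow_neg (by norm_num)]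
        rw [abs_of_neg hl]
        calc s ^ lam ≤ ((1:ℝ)/2) ^ lam := h1
          _ = (2:ℝ) ^ (-lam) := h2
    have hexp : Real.exp (-(a^2*(u-1))/2) ≤ Real.exp (a^2*μ*(s-1)) :=
      Real.exp_le_exp.mpr (by nlinarith)
    have hK2 : (0:ℝ) ≤ (Real.exp (1/4) * N * 4 / c) / a^2 := by positivity
    calc s ^ lam * ((Real.sqrt (2*Real.pi))⁻¹ * (Real.exp (-a^2/2) * Real.exp (-(a^2*(u-1))/2)))
        = (Real.sqrt (2*Real.pi))⁻¹ * Real.exp (-a^2/2) * (s ^ lam * Real.exp (-(a^2*(u-1))/2)) := by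
          ring
      _ ≤ (Real.sqrt (2*Real.pi))⁻¹ * Real.exp (-a^2/2) * ((2:ℝ) ^ |lam| * Real.exp (a^2*μ*(s-1))) := by
          apply mul_le_mul_of_nonneg_left _ (by positivity)
          apply mul_le_mul hslam hexp (Real.exp_pos _).le (by positivity)
      _ ≤ _ := by
          apply mul_le_mul_of_nonneg_left _ (by positivity)
          linarith

/-- For `λ ∈ ℝ`, `μ > 0`, there is `C > 0` such that for all `|a| ≥ 1`,
`∫₀¹ s^λ φ(a/s^μ) ds ≤ C a^{-2} φ(a)`. -/
theorem stmt_1 (lam μ : ℝ) (hμ : 0 < μ) :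
    ∃ C > 0, ∀ a : ℝ, 1 ≤ |a| →
      (∫ s in (0:ℝ)..1, s ^ lam * phi (a / s ^ μ)) ≤ C * (a ^ 2)⁻¹ * phi a := by
  obtain ⟨K₁, K₂, hK₁, hK₂, hkey⟩ := key_bound lam μ hμ
  refine ⟨K₁/μ + K₂, by positivity, fun a ha => ?_⟩
  have ha2 : 1 ≤ a^2 := by
    have := sq_abs a
    nlinarith [abs_nonneg a]
  have ha0 : (0:ℝ) < a^2 := by linarith
  have hb : (0:ℝ) < a^2*μ := by positivity
  have hsqrt : (0:ℝ) < (Real.sqrt (2*Real.pi))⁻¹ := by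
    have := Real.pi_pos
    positivity
  set cst : ℝ := (Real.sqrt (2*Real.pi))⁻¹ * Real.exp (-a^2/2) with hcst
  have hcstpos : 0 < cst := by positivity
  -- integrability of the dominating function
  have hgcont : Continuous (fun s : ℝ => cst * (K₁ * Real.exp (a^2*μ*(s-1)) + K₂ / a^2)) := by
    fun_prop
  have hgint : IntegrableOn (fun s : ℝ => cst * (K₁ * Real.exp (a^2*μ*(s-1)) + K₂ / a^2))
      (Set.Ioc (0:ℝ) 1) :=
    (hgcont.integrableOn_Icc (a := 0) (b := 1)).mono_set Set.Ioc_subset_Icc_self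
  rw [intervalIntegral.integral_of_le zero_le_one]
  have hmono : (∫ s in Set.Ioc (0:ℝ) 1, s ^ lam * phi (a / s ^ μ))
      ≤ ∫ s in Set.Ioc (0:ℝ) 1, cst * (K₁ * Real.exp (a^2*μ*(s-1)) + K₂ / a^2) := by
    apply integral_mono_of_nonneg
    · filter_upwards [ae_restrict_mem measurableSet_Ioc] with s hs
      have hs0 : (0:ℝ) < s := hs.1
      have h1 : (0:ℝ) ≤ s ^ lam := (Real.rpow_pos_of_pos hs0 _).le
      have h2 : (0:ℝ) ≤ phi (a / s ^ μ) := by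
        rw [phi]
        positivity
      exact mul_nonneg h1 h2
    · exact hgint
    · filter_upwards [ae_restrict_mem measurableSet_Ioc] with s hs
      exact hkey a ha2 s hs.1 hs.2
  refine hmono.trans ?_
  -- compute the integral of the dominating function
  have hexpint : (∫ s in Set.Ioc (0:ℝ) 1, Real.exp (a^2*μ*(s-1)))
      = (1 - Real.exp (-(a^2*μ))) / (a^2*μ) := by
    rw [← intervalIntegral.integral_of_le zero_le_one]
    have hderiv : ∀ s ∈ Set.uIcc (0:ℝ) 1,
        HasDerivAt (fun t => Real.exp (a^2*μ*(t-1)) / (a^2*μ)) (Real.exp (a^2*μ*(s-1))) s := by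
      intro s _
      have h1 : HasDerivAt (fun t : ℝ => a^2*μ*(t-1)) (a^2*μ) s := by
        simpa using ((hasDerivAt_id s).sub_const 1).const_mul (a^2*μ)
      have h2 := (Real.hasDerivAt_exp (a^2*μ*(s-1))).comp s h1
      have h3 := h2.div_const (a^2*μ)
      have h4 : Real.exp (a^2*μ*(s-1)) * (a^2*μ) / (a^2*μ) = Real.exp (a^2*μ*(s-1)) := by
        rw [mul_div_assoc, div_self hb.ne', mul_one]
      rw [h4] at h3
      simpa [Function.comp] using h3
    rw [intervalIntegral.integral_eq_sub_of_hasDerivAt hderiv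
      ((Real.continuous_exp.comp (by fun_prop)).intervalIntegrable 0 1)]
    rw [show a^2*μ*((1:ℝ)-1) = 0 by ring, show a^2*μ*((0:ℝ)-1) = -(a^2*μ) by ring,
      Real.exp_zero]
    ring
  have hconst : (∫ _ in Set.Ioc (0:ℝ) 1, (K₂ / a^2 : ℝ)) = K₂ / a^2 := by
    simp [Real.volume_Ioc]
  have hI1 : (1 - Real.exp (-(a^2*μ))) / (a^2*μ) ≤ 1/(a^2*μ) := by
    gcongr
    linarith [Real.exp_pos (-(a^2*μ))]
  have hsplit : (∫ s in Set.Ioc (0:ℝ) 1, cst * (K₁ * Real.exp (a^2*μ*(s-1)) + K₂/a^2))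
      = cst * (K₁ * ((1 - Real.exp (-(a^2*μ)))/(a^2*μ)) + K₂/a^2) := by
    rw [integral_const_mul]
    congr 1
    have hintexp : IntegrableOn (fun s : ℝ => Real.exp (a^2*μ*(s-1))) (Set.Ioc (0:ℝ) 1) :=
      ((Real.continuous_exp.comp (by fun_prop : Continuous fun s : ℝ => a^2*μ*(s-1))
        ).integrableOn_Icc (a := 0) (b := 1)).mono_set Set.Ioc_subset_Icc_self
    rw [integral_add (hintexp.const_mul K₁)
      ((integrableOn_const measure_Ioc_lt_top.ne))]
    rw [integral_const_mul, hexpint, hconst]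
  rw [hsplit]
  have hX : K₁ * ((1 - Real.exp (-(a^2*μ)))/(a^2*μ)) + K₂/a^2 ≤ (K₁/μ + K₂) * (a^2)⁻¹ := by
    have h1 : K₁ * ((1 - Real.exp (-(a^2*μ)))/(a^2*μ)) ≤ K₁ * (1/(a^2*μ)) :=
      mul_le_mul_of_nonneg_left hI1 hK₁.le
    have h2 : K₁ * (1/(a^2*μ)) + K₂/a^2 = (K₁/μ + K₂) * (a^2)⁻¹ := by
      field_simp
    linarith
  calc cst * (K₁ * ((1 - Real.exp (-(a^2*μ)))/(a^2*μ)) + K₂/a^2)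
      ≤ cst * ((K₁/μ + K₂) * (a^2)⁻¹) := mul_le_mul_of_nonneg_left hX hcstpos.le
    _ = (K₁/μ + K₂) * (a^2)⁻¹ * phi a := by rw [phi]; ring
end

section
/- There exists a constant C > 0 (depending only on H, C_H, α) such that for every integer n ≥ 2, ∑_{k=2}^{n} (t_k^{H(t_k)} − t_k^{H(t_{k-1})})² / t_{k-1}^{H(t_{k-1})} ≤ C n^{1−2α}. -/
open Finset

private lemma abs_rpow_sub_rpow_le {x a b m : ℝ} (hx : 0 < x) (hx1 : x ≤ 1)
    (hma : m ≤ a) (hmb : m ≤ b) :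
    |x ^ a - x ^ b| ≤ x ^ m * (|a - b| * (-Real.log x)) := by
  wlog hab : b ≤ a generalizing a b
  · rw [abs_sub_comm, abs_sub_comm a b]; exact this hmb hma (le_of_not_ge hab)
  have h1 : x ^ a ≤ x ^ b := Real.rpow_le_rpow_of_exponent_ge hx hx1 hab
  have hlog : 0 ≤ -Real.log x := by
    have := Real.log_nonpos hx.le hx1; linarith
  have hxb : x ^ b ≤ x ^ m := Real.rpow_le_rpow_of_exponent_ge hx hx1 hmb
  have hexp : x ^ (a - b) = Real.exp (Real.log x * (a - b)) := Real.rpow_def_of_pos hx _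
  have h2 : 1 - x ^ (a - b) ≤ (a - b) * (-Real.log x) := by
    have := Real.add_one_le_exp (Real.log x * (a - b))
    rw [hexp]; nlinarith
  have h3 : 0 ≤ 1 - x ^ (a - b) :=
    sub_nonneg.2 (Real.rpow_le_one hx.le hx1 (by linarith))
  have hfact : x ^ b - x ^ a = x ^ b * (1 - x ^ (a - b)) := by
    rw [mul_sub, mul_one, ← Real.rpow_add hx]; ring_nf
  rw [abs_of_nonpos (by linarith), abs_of_nonneg (by linarith), neg_sub, hfact]
  exact mul_le_mul hxb h2 h3 (Real.rpow_nonneg hx.le m)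

private lemma neg_log_le_rpow' {x ε : ℝ} (hx : 0 < x) (hε : 0 < ε) :
    -Real.log x ≤ x ^ (-ε) / ε := by
  have h := Real.log_le_rpow_div (x := x⁻¹) (by positivity) hε
  rwa [Real.log_inv, Real.inv_rpow hx.le, ← Real.rpow_neg hx.le] at h

/-- For a Hurst function `H` on `[0,1]` taking values in `(1/2,1)`, with minimum `Hmin` and
maximum `Hmax`, which is `α`-Hölder with constant `C_H` for some `α ∈ (1/2,1]`, there is a
constant `C > 0` such that for every `n ≥ 2`,
`∑_{k=2}^{n} (t_k^{H(t_k)} − t_k^{H(t_{k-1})})² / t_{k-1}^{H(t_{k-1})} ≤ C n^{1−2α}`,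
where `t_k = k/n`. -/
theorem stmt_2 (H : ℝ → ℝ) (C_H α Hmin Hmax : ℝ)
    (hcont : ContinuousOn H (Set.Icc 0 1))
    (hrange : ∀ t ∈ Set.Icc (0:ℝ) 1, H t ∈ Set.Ioo (1/2 : ℝ) 1)
    (hmin : IsLeast (H '' Set.Icc (0:ℝ) 1) Hmin)
    (hmax : IsGreatest (H '' Set.Icc (0:ℝ) 1) Hmax)
    (hC_H : 0 < C_H) (hα : α ∈ Set.Ioc (1/2 : ℝ) 1)
    (hHolder : ∀ t ∈ Set.Icc (0:ℝ) 1, ∀ s ∈ Set.Icc (0:ℝ) 1,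
      |H t - H s| ≤ C_H * |t - s| ^ α) :
    ∃ C > 0, ∀ n : ℕ, 2 ≤ n →
      ∑ k ∈ Finset.Icc 2 n,
        (((k : ℝ)/(n : ℝ)) ^ H ((k : ℝ)/(n : ℝ))
          - ((k : ℝ)/(n : ℝ)) ^ H (((k : ℝ) - 1)/(n : ℝ))) ^ 2
          / ((((k : ℝ) - 1)/(n : ℝ)) ^ H (((k : ℝ) - 1)/(n : ℝ)))
      ≤ C * (n : ℝ) ^ (1 - 2 * α) := by
  obtain ⟨⟨t₀, ht₀, hHt₀⟩, hminle⟩ := hmin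
  obtain ⟨⟨t₁, ht₁, hHt₁⟩, hmaxle⟩ := hmax
  have hmin12 : 1/2 < Hmin := hHt₀ ▸ (hrange t₀ ht₀).1
  have hmax1 : Hmax < 1 := hHt₁ ▸ (hrange t₁ ht₁).2
  have hminmax : Hmin ≤ Hmax := hHt₀ ▸ hmaxle ⟨t₀, ht₀, rfl⟩
  obtain ⟨ε, hε, hεdef⟩ : ∃ ε : ℝ, 0 < ε ∧ Hmin + Hmin + (-ε + -ε) = Hmax :=
    ⟨(2 * Hmin - Hmax) / 2, by linarith, by ring⟩
  refine ⟨2 * C_H ^ 2 / ε ^ 2, by positivity, ?_⟩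
  intro n hn
  have hn0 : (0:ℝ) < n := by positivity
  have key : ∀ k ∈ Finset.Icc 2 n,
      (((k : ℝ)/(n : ℝ)) ^ H ((k : ℝ)/(n : ℝ))
          - ((k : ℝ)/(n : ℝ)) ^ H (((k : ℝ) - 1)/(n : ℝ))) ^ 2
          / ((((k : ℝ) - 1)/(n : ℝ)) ^ H (((k : ℝ) - 1)/(n : ℝ)))
      ≤ (2 * C_H ^ 2 / ε ^ 2) * (n : ℝ) ^ (-(2 * α)) := by
    intro k hk
    rw [Finset.mem_Icc] at hk
    obtain ⟨hk2, hkn⟩ := hk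
    have hk2' : (2:ℝ) ≤ (k:ℝ) := by exact_mod_cast hk2
    have hkn' : (k:ℝ) ≤ (n:ℝ) := by exact_mod_cast hkn
    set t : ℝ := (k:ℝ)/(n:ℝ) with htdef
    set s : ℝ := ((k:ℝ) - 1)/(n:ℝ) with hsdef
    have ht0 : 0 < t := by positivity
    have ht1 : t ≤ 1 := by rw [htdef, div_le_one hn0]; linarith
    have hs0 : 0 < s := div_pos (by linarith) hn0
    have hs1 : s ≤ 1 := by rw [hsdef, div_le_one hn0]; linarith
    have hts : t ≤ 2 * s := by
      rw [htdef, hsdef, div_le_iff₀ hn0]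
      field_simp
      linarith
    have htI : t ∈ Set.Icc (0:ℝ) 1 := ⟨ht0.le, ht1⟩
    have hsI : s ∈ Set.Icc (0:ℝ) 1 := ⟨hs0.le, hs1⟩
    set a : ℝ := H t
    set b : ℝ := H s
    have hma : Hmin ≤ a := hminle ⟨t, htI, rfl⟩
    have hmb : Hmin ≤ b := hminle ⟨s, hsI, rfl⟩
    have hMa : a ≤ Hmax := hmaxle ⟨t, htI, rfl⟩
    have hMb : b ≤ Hmax := hmaxle ⟨s, hsI, rfl⟩
    -- Hölder bound on |a - b|
    have hts1n : t - s = 1 / n := by rw [htdef, hsdef]; field_simp; ring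
    have hδ : |a - b| ≤ C_H * (n:ℝ) ^ (-α) := by
      have h0 := hHolder t htI s hsI
      have h1 : |t - s| = (n:ℝ)⁻¹ := by
        rw [hts1n, one_div, abs_of_pos (by positivity)]
      rwa [h1, Real.inv_rpow hn0.le, ← Real.rpow_neg hn0.le] at h0
    have hδ0 : 0 ≤ |a - b| := abs_nonneg _
    -- numerator bound
    have hlog : -Real.log t ≤ t ^ (-ε) / ε := neg_log_le_rpow' ht0 hε
    have hlog0 : 0 ≤ -Real.log t := by
      have := Real.log_nonpos ht0.le ht1; linarith
    have hnum1 : |t ^ a - t ^ b| ≤ t ^ Hmin * (|a - b| * (t ^ (-ε) / ε)) := by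
      refine (abs_rpow_sub_rpow_le ht0 ht1 hma hmb).trans ?_
      exact mul_le_mul_of_nonneg_left (mul_le_mul_of_nonneg_left hlog hδ0)
        (Real.rpow_nonneg ht0.le _)
    have hnum : (t ^ a - t ^ b) ^ 2 ≤ t ^ Hmax * (|a - b| ^ 2 / ε ^ 2) := by
      have h1 : (t ^ a - t ^ b) ^ 2 ≤ (t ^ Hmin * (|a - b| * (t ^ (-ε) / ε))) ^ 2 := by
        rw [← sq_abs (t ^ a - t ^ b)]
        exact pow_le_pow_left₀ (abs_nonneg _) hnum1 2
      refine h1.trans_eq ?_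
      have hexp : t ^ Hmin * t ^ Hmin * (t ^ (-ε) * t ^ (-ε)) = t ^ Hmax := by
        rw [← Real.rpow_add ht0, ← Real.rpow_add ht0, ← Real.rpow_add ht0, hεdef]
      calc (t ^ Hmin * (|a - b| * (t ^ (-ε) / ε))) ^ 2
          = t ^ Hmin * t ^ Hmin * (t ^ (-ε) * t ^ (-ε)) * (|a - b| ^ 2 / ε ^ 2) := by ring
        _ = t ^ Hmax * (|a - b| ^ 2 / ε ^ 2) := by rw [hexp]
    -- denominator bound
    have hden : t ^ Hmax / 2 ≤ s ^ b := by
      have h1 : s ^ Hmax ≤ s ^ b := Real.rpow_le_rpow_of_exponent_ge hs0 hs1 hMb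
      have h2 : (t / 2) ^ Hmax ≤ s ^ Hmax := by
        apply Real.rpow_le_rpow (by positivity) (by linarith) (by linarith)
      have h3 : t ^ Hmax / 2 ≤ (t / 2) ^ Hmax := by
        rw [Real.div_rpow ht0.le (by norm_num : (0:ℝ) ≤ 2), div_le_div_iff₀ (by norm_num)
          (by positivity)]
        have h4 : (2:ℝ) ^ Hmax ≤ 2 ^ (1:ℝ) :=
          Real.rpow_le_rpow_of_exponent_le (by norm_num) hmax1.le
        rw [Real.rpow_one] at h4
        nlinarith [Real.rpow_nonneg ht0.le Hmax]
      linarith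
    have htM0 : 0 < t ^ Hmax := Real.rpow_pos_of_pos ht0 _
    -- combine
    have hcomb : (t ^ a - t ^ b) ^ 2 / s ^ b
        ≤ (t ^ Hmax * (|a - b| ^ 2 / ε ^ 2)) / (t ^ Hmax / 2) :=
      div_le_div₀ (by positivity) hnum (by positivity) hden
    have heq : (t ^ Hmax * (|a - b| ^ 2 / ε ^ 2)) / (t ^ Hmax / 2)
        = 2 * |a - b| ^ 2 / ε ^ 2 := by
      field_simp
    rw [heq] at hcomb
    refine hcomb.trans ?_
    have hδ2 : |a - b| ^ 2 ≤ C_H ^ 2 * (n:ℝ) ^ (-(2 * α)) := by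
      have h1 : |a - b| ^ 2 ≤ (C_H * (n:ℝ) ^ (-α)) ^ 2 := pow_le_pow_left₀ hδ0 hδ 2
      refine h1.trans_eq ?_
      rw [mul_pow, ← Real.rpow_natCast ((n:ℝ) ^ (-α)) 2, ← Real.rpow_mul hn0.le]
      congr 1
      push_cast
      ring
    calc 2 * |a - b| ^ 2 / ε ^ 2 ≤ 2 * (C_H ^ 2 * (n:ℝ) ^ (-(2 * α))) / ε ^ 2 := by
          apply div_le_div_of_nonneg_right ?_ (by positivity)
          · linarith
        _ = (2 * C_H ^ 2 / ε ^ 2) * (n:ℝ) ^ (-(2 * α)) := by ring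
  calc ∑ k ∈ Finset.Icc 2 n,
        (((k : ℝ)/(n : ℝ)) ^ H ((k : ℝ)/(n : ℝ))
          - ((k : ℝ)/(n : ℝ)) ^ H (((k : ℝ) - 1)/(n : ℝ))) ^ 2
          / ((((k : ℝ) - 1)/(n : ℝ)) ^ H (((k : ℝ) - 1)/(n : ℝ)))
      ≤ ∑ k ∈ Finset.Icc 2 n, (2 * C_H ^ 2 / ε ^ 2) * (n : ℝ) ^ (-(2 * α)) :=
        Finset.sum_le_sum key
    _ = (Finset.Icc 2 n).card * ((2 * C_H ^ 2 / ε ^ 2) * (n : ℝ) ^ (-(2 * α))) := by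
        rw [Finset.sum_const, nsmul_eq_mul]
    _ ≤ (n:ℝ) * ((2 * C_H ^ 2 / ε ^ 2) * (n : ℝ) ^ (-(2 * α))) := by
        apply mul_le_mul_of_nonneg_right ?_ (by positivity)
        · rw [Nat.card_Icc]
          have : (n + 1 - 2 : ℕ) ≤ n := by omega
          exact_mod_cast this
    _ = (2 * C_H ^ 2 / ε ^ 2) * (n : ℝ) ^ (1 - 2 * α) := by
        rw [show (1 - 2*α) = 1 + (-(2*α)) by ring, Real.rpow_add hn0, Real.rpow_one]
        ring
end

section
/- There exists a constant C > 0 (depending only on H) such that for every integer n ≥ 2, ∑_{k=2}^{n} (t_k^{H(t_{k-1})} − t_{k-1}^{H(t_{k-1})})² / t_{k-1}^{H(t_{k-1})} ≤ C n^{−H_min}. -/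
open Finset

/-- For a continuous Hurst function `H` on `[0,1]` taking values in `(1/2,1)`, with minimum
`Hmin` and maximum `Hmax`, there is a constant `C > 0` such that for every `n ≥ 2`,
`∑_{k=2}^{n} (t_k^{H(t_{k-1})} − t_{k-1}^{H(t_{k-1})})² / t_{k-1}^{H(t_{k-1})} ≤ C n^{−Hmin}`,
where `t_k = k/n`. -/
theorem stmt_3 (H : ℝ → ℝ) (Hmin Hmax : ℝ)
    (hcont : ContinuousOn H (Set.Icc 0 1))
    (hrange : ∀ t ∈ Set.Icc (0:ℝ) 1, H t ∈ Set.Ioo (1/2 : ℝ) 1)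
    (hmin : IsLeast (H '' Set.Icc (0:ℝ) 1) Hmin)
    (hmax : IsGreatest (H '' Set.Icc (0:ℝ) 1) Hmax) :
    ∃ C > 0, ∀ n : ℕ, 2 ≤ n →
      ∑ k ∈ Finset.Icc 2 n,
        (((k : ℝ)/(n : ℝ)) ^ H (((k : ℝ) - 1)/(n : ℝ))
          - (((k : ℝ) - 1)/(n : ℝ)) ^ H (((k : ℝ) - 1)/(n : ℝ))) ^ 2
          / ((((k : ℝ) - 1)/(n : ℝ)) ^ H (((k : ℝ) - 1)/(n : ℝ)))
      ≤ C * (n : ℝ) ^ (-Hmin) := by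
  -- basic facts about Hmin, Hmax
  obtain ⟨⟨tm, htm, htmE⟩, hminLB⟩ := hmin
  obtain ⟨⟨tM, htM, htME⟩, hmaxUB⟩ := hmax
  have hHmax1 : Hmax < 1 := by
    have := hrange tM htM; rw [← htME]; exact this.2
  have hsum : Summable (fun j : ℕ => (j : ℝ) ^ (Hmax - 2)) :=
    Real.summable_nat_rpow.mpr (by linarith)
  set C : ℝ := 1 + ∑' j : ℕ, (j : ℝ) ^ (Hmax - 2) with hC
  have htsum_nonneg : 0 ≤ ∑' j : ℕ, (j : ℝ) ^ (Hmax - 2) :=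
    tsum_nonneg fun j => Real.rpow_nonneg (Nat.cast_nonneg j) _
  refine ⟨C, by positivity, fun n hn => ?_⟩
  have hn0 : (0 : ℝ) < n := by positivity
  have hn1 : (1 : ℝ) ≤ n := by exact_mod_cast Nat.one_le_of_lt hn
  -- termwise bound
  have hterm : ∀ k ∈ Finset.Icc 2 n,
      (((k : ℝ)/(n : ℝ)) ^ H (((k : ℝ) - 1)/(n : ℝ))
        - (((k : ℝ) - 1)/(n : ℝ)) ^ H (((k : ℝ) - 1)/(n : ℝ))) ^ 2
        / ((((k : ℝ) - 1)/(n : ℝ)) ^ H (((k : ℝ) - 1)/(n : ℝ)))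
      ≤ ((k : ℝ) - 1) ^ (Hmax - 2) * (n : ℝ) ^ (-Hmin) := by
    intro k hk
    rw [Finset.mem_Icc] at hk
    obtain ⟨hk2, hkn⟩ := hk
    set m : ℝ := (k : ℝ) - 1 with hm
    have hm1 : (1 : ℝ) ≤ m := by
      have : (2 : ℝ) ≤ (k : ℝ) := by exact_mod_cast hk2
      simp [hm]; linarith
    have hm0 : (0 : ℝ) < m := by linarith
    have hmn : m + 1 ≤ (n : ℝ) := by
      have : (k : ℝ) ≤ n := by exact_mod_cast hkn
      simp [hm]; linarith
    set a : ℝ := m / n with ha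
    have ha0 : 0 < a := by positivity
    have ha1 : a ≤ 1 := by
      rw [ha, div_le_one hn0]; linarith
    set h : ℝ := H (m / n) with hh
    have haI : (m / n) ∈ Set.Icc (0:ℝ) 1 := ⟨le_of_lt ha0, ha1⟩
    have hh01 := hrange _ haI
    have hhmin : Hmin ≤ h := hminLB ⟨m / n, haI, rfl⟩
    have hhmax : h ≤ Hmax := hmaxUB ⟨m / n, haI, rfl⟩
    have hh0 : 0 < h := by linarith [hh01.1]
    have hh1 : h < 1 := hh01.2
    -- Bernoulli: (k/n)^h ≤ a^h (1 + h/m)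
    have hb : ((k : ℝ) / n) ^ h ≤ a ^ h * (1 + h * (1 / m)) := by
      have hkk : (k : ℝ) / n = a * (1 + 1 / m) := by
        have hkm : (k : ℝ) = m + 1 := by rw [hm]; ring
        rw [hkm, ha]
        field_simp
      rw [hkk, Real.mul_rpow (le_of_lt ha0) (by positivity)]
      have hber : (1 + 1 / m) ^ h ≤ 1 + h * (1 / m) :=
        rpow_one_add_le_one_add_mul_self (le_trans (by norm_num : (-1:ℝ) ≤ 0) (by positivity)) (le_of_lt hh0) (le_of_lt hh1)
      exact mul_le_mul_of_nonneg_left hber (Real.rpow_nonneg (le_of_lt ha0) _)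
    have hdiff : ((k : ℝ) / n) ^ h - a ^ h ≤ a ^ h / m := by
      have h2 : a ^ h * h / m ≤ a ^ h / m := by
        gcongr
        nlinarith [Real.rpow_nonneg (le_of_lt ha0) h]
      have heq : a ^ h * (1 + h * (1 / m)) = a ^ h + a ^ h * h / m := by
        ring
      linarith
    have hdiff0 : 0 ≤ ((k : ℝ) / n) ^ h - a ^ h := by
      have : a ≤ (k : ℝ) / n := by
        rw [ha, div_le_div_iff₀ hn0 hn0]
        nlinarith
      have := Real.rpow_le_rpow (le_of_lt ha0) this (le_of_lt hh0)
      linarith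
    have hah : 0 < a ^ h := Real.rpow_pos_of_pos ha0 _
    have hsq : (((k : ℝ) / n) ^ h - a ^ h) ^ 2 / a ^ h ≤ a ^ h / m ^ 2 := by
      have h2 : (((k : ℝ) / n) ^ h - a ^ h) ^ 2 ≤ (a ^ h / m) ^ 2 :=
        pow_le_pow_left₀ hdiff0 hdiff 2
      calc (((k : ℝ) / n) ^ h - a ^ h) ^ 2 / a ^ h
          ≤ (a ^ h / m) ^ 2 / a ^ h := by gcongr
        _ = a ^ h / m ^ 2 := by field_simp
    -- now a^h/m² = m^(h-2) n^(-h) ≤ m^(Hmax-2) n^(-Hmin)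
    have hre : a ^ h / m ^ 2 = m ^ (h - 2) * (n : ℝ) ^ (-h) := by
      rw [ha, Real.div_rpow (le_of_lt hm0) (le_of_lt hn0),
        Real.rpow_sub hm0, Real.rpow_neg (le_of_lt hn0), Real.rpow_two]
      ring
    have hfin : m ^ (h - 2) * (n : ℝ) ^ (-h) ≤ m ^ (Hmax - 2) * (n : ℝ) ^ (-Hmin) :=
      mul_le_mul (Real.rpow_le_rpow_of_exponent_le hm1 (by linarith))
        (Real.rpow_le_rpow_of_exponent_le hn1 (by linarith))
        (Real.rpow_nonneg (le_of_lt hn0) _) (Real.rpow_nonneg (le_of_lt hm0) _)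
    calc (((k : ℝ)/(n : ℝ)) ^ H (((k : ℝ) - 1)/(n : ℝ))
          - (((k : ℝ) - 1)/(n : ℝ)) ^ H (((k : ℝ) - 1)/(n : ℝ))) ^ 2
          / ((((k : ℝ) - 1)/(n : ℝ)) ^ H (((k : ℝ) - 1)/(n : ℝ)))
        = (((k : ℝ) / n) ^ h - a ^ h) ^ 2 / a ^ h := by rw [ha, hh, hm]
      _ ≤ a ^ h / m ^ 2 := hsq
      _ = m ^ (h - 2) * (n : ℝ) ^ (-h) := hre
      _ ≤ m ^ (Hmax - 2) * (n : ℝ) ^ (-Hmin) := hfin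
  -- sum the bounds
  have hstep := Finset.sum_le_sum hterm
  refine le_trans hstep ?_
  rw [← Finset.sum_mul]
  have hnHmin : 0 ≤ (n : ℝ) ^ (-Hmin) := Real.rpow_nonneg (le_of_lt hn0) _
  have hsum_le : ∑ k ∈ Finset.Icc 2 n, ((k : ℝ) - 1) ^ (Hmax - 2) ≤ C := by
    have hrw : ∑ k ∈ Finset.Icc 2 n, ((k : ℝ) - 1) ^ (Hmax - 2)
        = ∑ j ∈ (Finset.Icc 2 n).image (fun k : ℕ => k - 1),
            (j : ℝ) ^ (Hmax - 2) := by
      rw [Finset.sum_image (f := fun j : ℕ => (j : ℝ) ^ (Hmax - 2))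
        (fun x hx y hy hxy => by
          simp only [Finset.mem_coe, Finset.mem_Icc] at hx hy; omega)]
      refine Finset.sum_congr rfl fun k hk => ?_
      rw [Finset.mem_Icc] at hk
      have h1 : 1 ≤ k := le_trans one_le_two hk.1
      rw [Nat.cast_sub h1, Nat.cast_one]
    rw [hrw]
    have := Summable.sum_le_tsum ((Finset.Icc 2 n).image (fun k => k - 1))
      (fun j _ => Real.rpow_nonneg (Nat.cast_nonneg j) (Hmax - 2)) hsum
    linarith
  exact mul_le_mul_of_nonneg_right hsum_le hnHmin
end

section
/- There exists a constant C' > 0 such that for all t, s ∈ [0,1], E(X_t − X_s)² ≤ |t−s|^{2H_min} + C' |t−s|^{H_min + α} + C' |t−s|^{2α}, where X_t := B^{H(t)}_t. -/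
open MeasureTheory

/-- Variogram bound for the multifractional Brownian motion `X_t = B^{H(t)}_t`:
`E(X_t − X_s)² ≤ |t−s|^{2Hmin} + C' |t−s|^{Hmin+α} + C' |t−s|^{2α}`. -/
theorem stmt_7 {Ω : Type*} [MeasurableSpace Ω] (P : Measure Ω) [IsProbabilityMeasure P]
    (H : ℝ → ℝ) (C_H α Hmin Hmax : ℝ)
    (hcont : ContinuousOn H (Set.Icc 0 1))
    (hrange : ∀ t ∈ Set.Icc (0:ℝ) 1, H t ∈ Set.Ioo (1/2 : ℝ) 1)
    (hmin : IsLeast (H '' Set.Icc (0:ℝ) 1) Hmin)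
    (hmax : IsGreatest (H '' Set.Icc (0:ℝ) 1) Hmax)
    (hC_H : 0 < C_H) (hα : α ∈ Set.Ioc (1/2 : ℝ) 1)
    (hHolder : ∀ t ∈ Set.Icc (0:ℝ) 1, ∀ s ∈ Set.Icc (0:ℝ) 1,
      |H t - H s| ≤ C_H * |t - s| ^ α)
    (B : ℝ → ℝ → Ω → ℝ)
    (hL2 : ∀ h ∈ Set.Icc Hmin Hmax, ∀ t ∈ Set.Icc (0:ℝ) 1, MemLp (B h t) 2 P)
    (hfBm : ∀ h ∈ Set.Icc Hmin Hmax, ∀ t ∈ Set.Icc (0:ℝ) 1, ∀ s ∈ Set.Icc (0:ℝ) 1,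
      ∫ ω, (B h t ω - B h s ω) ^ 2 ∂P = |t - s| ^ (2 * h))
    (hB2 : ∃ C > 0, ∀ t ∈ Set.Icc (0:ℝ) 1, ∀ h₁ ∈ Set.Icc Hmin Hmax, ∀ h₂ ∈ Set.Icc Hmin Hmax,
      ∫ ω, (B h₁ t ω - B h₂ t ω) ^ 2 ∂P ≤ C * (h₁ - h₂) ^ 2) :
    ∃ C' > 0, ∀ t ∈ Set.Icc (0:ℝ) 1, ∀ s ∈ Set.Icc (0:ℝ) 1,
      ∫ ω, (B (H t) t ω - B (H s) s ω) ^ 2 ∂P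
        ≤ |t - s| ^ (2 * Hmin) + C' * |t - s| ^ (Hmin + α) + C' * |t - s| ^ (2 * α) := by

  obtain ⟨C, hC, hB⟩ := hB2
  have hminpos : (0:ℝ) < Hmin := by
    obtain ⟨⟨t0, ht0, h0⟩, _⟩ := hmin
    have h1 := (hrange t0 ht0).1
    rw [h0] at h1; linarith
  have hαpos : (0:ℝ) < α := by linarith [hα.1]
  refine ⟨1 + C * C_H ^ 2, by positivity, ?_⟩
  intro t ht s hs
  have hHt : H t ∈ Set.Icc Hmin Hmax := ⟨hmin.2 ⟨t, ht, rfl⟩, hmax.2 ⟨t, ht, rfl⟩⟩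
  have hHs : H s ∈ Set.Icc Hmin Hmax := ⟨hmin.2 ⟨s, hs, rfl⟩, hmax.2 ⟨s, hs, rfl⟩⟩
  by_cases hts : t = s
  · subst hts
    simp only [sub_self, abs_zero]
    rw [Real.zero_rpow (by positivity), Real.zero_rpow (by positivity),
      Real.zero_rpow (by positivity)]
    simp
  · set x := |t - s| with hxdef
    have hx : 0 < x := abs_pos.mpr (sub_ne_zero.mpr hts)
    have hx1 : x ≤ 1 := by
      rw [hxdef, abs_sub_le_iff]
      constructor <;> linarith [ht.1, ht.2, hs.1, hs.2]
    set l := x ^ (α - Hmin) with hldef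
    have hl : 0 < l := Real.rpow_pos_of_pos hx _
    set a : Ω → ℝ := fun ω => B (H t) t ω - B (H t) s ω with hadef
    set b : Ω → ℝ := fun ω => B (H t) s ω - B (H s) s ω with hbdef
    have ha2 : MemLp a 2 P := (hL2 (H t) hHt t ht).sub (hL2 (H t) hHt s hs)
    have hb2 : MemLp b 2 P := (hL2 (H t) hHt s hs).sub (hL2 (H s) hHs s hs)
    have hia : Integrable (fun ω => a ω ^ 2) P := ha2.integrable_sq
    have hib : Integrable (fun ω => b ω ^ 2) P := hb2.integrable_sq
    have hiab : Integrable ((fun ω => (a ω + b ω) ^ 2)) P := by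
      have : MemLp (fun ω => a ω + b ω) 2 P := ha2.add hb2
      exact this.integrable_sq
    have hpt : ∀ ω, (a ω + b ω) ^ 2 ≤ (1 + l) * a ω ^ 2 + (1 + l⁻¹) * b ω ^ 2 := by
      intro ω
      have h2 : 2 * (a ω * b ω) ≤ l * a ω ^ 2 + l⁻¹ * b ω ^ 2 := by
        rw [← sub_nonneg]
        have hkey : l * a ω ^ 2 + l⁻¹ * b ω ^ 2 - 2 * (a ω * b ω)
            = (l * a ω - b ω) ^ 2 / l := by
          field_simp
          ring
        rw [hkey]
        positivity
      nlinarith [h2]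
    have hstep1 : ∫ ω, (B (H t) t ω - B (H s) s ω) ^ 2 ∂P
        ≤ (1 + l) * ∫ ω, a ω ^ 2 ∂P + (1 + l⁻¹) * ∫ ω, b ω ^ 2 ∂P := by
      have heq : ∀ ω, (B (H t) t ω - B (H s) s ω) ^ 2 = (a ω + b ω) ^ 2 := by
        intro ω; rw [hadef, hbdef]; ring
      calc ∫ ω, (B (H t) t ω - B (H s) s ω) ^ 2 ∂P
          = ∫ ω, (a ω + b ω) ^ 2 ∂P := by simp only [heq]
        _ ≤ ∫ ω, ((1 + l) * a ω ^ 2 + (1 + l⁻¹) * b ω ^ 2) ∂P := by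
            apply integral_mono hiab ((hia.const_mul _).add (hib.const_mul _)) hpt
        _ = (1 + l) * ∫ ω, a ω ^ 2 ∂P + (1 + l⁻¹) * ∫ ω, b ω ^ 2 ∂P := by
            rw [integral_add (hia.const_mul _) (hib.const_mul _),
              integral_const_mul, integral_const_mul]
    have hIa : ∫ ω, a ω ^ 2 ∂P = x ^ (2 * H t) := hfBm (H t) hHt t ht s hs
    have hIab : ∫ ω, a ω ^ 2 ∂P ≤ x ^ (2 * Hmin) := by
      rw [hIa]
      exact Real.rpow_le_rpow_of_exponent_ge hx hx1 (by linarith [hHt.1])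
    have hIb : ∫ ω, b ω ^ 2 ∂P ≤ C * C_H ^ 2 * x ^ (2 * α) := by
      have h1 : ∫ ω, b ω ^ 2 ∂P ≤ C * (H t - H s) ^ 2 := hB s hs (H t) hHt (H s) hHs
      have h2 : (H t - H s) ^ 2 ≤ (C_H * x ^ α) ^ 2 := by
        have := hHolder t ht s hs
        nlinarith [abs_nonneg (H t - H s), sq_abs (H t - H s)]
      have h3 : (C_H * x ^ α) ^ 2 = C_H ^ 2 * x ^ (2 * α) := by
        rw [mul_pow, ← Real.rpow_natCast (x ^ α) 2, ← Real.rpow_mul hx.le]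
        norm_num [mul_comm]
      calc ∫ ω, b ω ^ 2 ∂P ≤ C * (H t - H s) ^ 2 := h1
        _ ≤ C * (C_H ^ 2 * x ^ (2 * α)) := by rw [← h3]; exact mul_le_mul_of_nonneg_left h2 hC.le
        _ = C * C_H ^ 2 * x ^ (2 * α) := by ring
    have hbnn : 0 ≤ ∫ ω, b ω ^ 2 ∂P := integral_nonneg (fun ω => sq_nonneg _)
    have hann : 0 ≤ ∫ ω, a ω ^ 2 ∂P := integral_nonneg (fun ω => sq_nonneg _)
    have hlmul : l * x ^ (2 * Hmin) = x ^ (Hmin + α) := by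
      rw [hldef, ← Real.rpow_add hx]; ring_nf
    have hlinv : l⁻¹ * x ^ (2 * α) = x ^ (Hmin + α) := by
      rw [hldef, ← Real.rpow_neg hx.le, ← Real.rpow_add hx]; ring_nf
    have hxa : 0 ≤ x ^ (2 * α) := Real.rpow_nonneg hx.le _
    have hxha : 0 ≤ x ^ (Hmin + α) := Real.rpow_nonneg hx.le _
    have hlinvpos : 0 < l⁻¹ := inv_pos.mpr hl
    calc ∫ ω, (B (H t) t ω - B (H s) s ω) ^ 2 ∂P
        ≤ (1 + l) * ∫ ω, a ω ^ 2 ∂P + (1 + l⁻¹) * ∫ ω, b ω ^ 2 ∂P := hstep1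
      _ ≤ (1 + l) * x ^ (2 * Hmin) + (1 + l⁻¹) * (C * C_H ^ 2 * x ^ (2 * α)) := by
          gcongr <;> positivity
      _ = x ^ (2 * Hmin) + (l * x ^ (2 * Hmin) + C * C_H ^ 2 * (l⁻¹ * x ^ (2 * α)))
            + C * C_H ^ 2 * x ^ (2 * α) := by ring
      _ = x ^ (2 * Hmin) + (1 + C * C_H ^ 2) * x ^ (Hmin + α)
            + C * C_H ^ 2 * x ^ (2 * α) := by rw [hlmul, hlinv]; ring
      _ ≤ x ^ (2 * Hmin) + (1 + C * C_H ^ 2) * x ^ (Hmin + α)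
            + (1 + C * C_H ^ 2) * x ^ (2 * α) := by nlinarith
end

section
/- There exists a constant C > 0 (depending only on H, C_H, α) such that for all a ∈ ℝ and every integer n ≥ 2, | ∑_{k=2}^{n} ( t_k^{H(t_k)} [φ(a/t_k^{H(t_k)}) − φ(a/t_k^{H(t_{k-1})})] − a [Φ̄(a/t_k^{H(t_k)}) − Φ̄(a/t_k^{H(t_{k-1})})] ) | ≤ C φ(a) n^{1−2α}. -/
open Finset MeasureTheory

/-- Standard normal tail probability `P(Y > x)`. -/
noncomputable def Phibar (x : ℝ) : ℝ := ∫ v in Set.Ioi x, phi v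

lemma phi_pos (a : ℝ) : 0 < phi a := by
  apply mul_pos (inv_pos.2 (Real.sqrt_pos.2 (by positivity))) (Real.exp_pos _)

lemma phi_le {u w : ℝ} (h : |w| ≤ |u|) : phi u ≤ phi w := by
  unfold phi
  apply mul_le_mul_of_nonneg_left _ (by positivity)
  apply Real.exp_le_exp.2
  have : w^2 ≤ u^2 := by
    rw [← sq_abs w, ← sq_abs u]; exact pow_le_pow_left₀ (abs_nonneg _) h 2
  linarith

lemma continuous_phi : Continuous phi := by
  unfold phi; fun_prop

lemma integrable_phi : Integrable phi := by
  unfold phi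
  apply Integrable.const_mul
  have h : ∀ a : ℝ, -a^2/2 = -(2⁻¹:ℝ) * a^2 := by intro a; ring
  simp_rw [h]
  exact integrable_exp_neg_mul_sq (by norm_num)

lemma hasDerivAt_phi (x : ℝ) : HasDerivAt phi (-x * phi x) x := by
  have h1 : HasDerivAt (fun a : ℝ => -a^2/2) (-x) x := by
    have := ((hasDerivAt_pow 2 x).neg).div_const 2
    refine this.congr_deriv ?_; push_cast; ring
  have := (h1.exp).const_mul (Real.sqrt (2 * Real.pi))⁻¹
  refine this.congr_deriv ?_
  unfold phi; ring

lemma hasDerivAt_Phibar (x : ℝ) : HasDerivAt Phibar (-phi x) x := by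
  have key : ∀ y : ℝ, Phibar y = Phibar 0 - ∫ t in (0:ℝ)..y, phi t := by
    intro y
    have h1 : (∫ v in Set.Iic y, phi v) - (∫ v in Set.Iic (0:ℝ), phi v)
        = ∫ t in (0:ℝ)..y, phi t :=
      intervalIntegral.integral_Iic_sub_Iic integrable_phi.integrableOn
        integrable_phi.integrableOn
    have h2 : ∀ z : ℝ, Phibar z = (∫ v, phi v) - ∫ v in Set.Iic z, phi v := by
      intro z
      have := MeasureTheory.integral_add_compl (measurableSet_Iic (a := z)) integrable_phi
      rw [Set.compl_Iic] at this
      unfold Phibar; linarith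
    rw [h2 y, h2 0]; linarith
  have hD : HasDerivAt (fun y => ∫ t in (0:ℝ)..y, phi t) (phi x) x :=
    intervalIntegral.integral_hasDerivAt_right (continuous_phi.intervalIntegrable _ _)
      (continuous_phi.stronglyMeasurableAtFilter _ _) continuous_phi.continuousAt
  have : HasDerivAt (fun y => Phibar 0 - ∫ t in (0:ℝ)..y, phi t) (-phi x) x :=
    (hD.const_sub (Phibar 0))
  exact this.congr_of_eventuallyEq (Filter.Eventually.of_forall (fun y => (key y)))

lemma core (a m M x y : ℝ) (hm : 0 < m) (hx : x ∈ Set.Icc m M) (hy : y ∈ Set.Icc m M) :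
    |x * (phi (a/x) - phi (a/y)) - a * (Phibar (a/x) - Phibar (a/y))|
      ≤ (M - m)^2 * a^2 * phi (a/M) / m^3 := by
  have hMm : m ≤ M := le_trans hx.1 hx.2
  set g : ℝ → ℝ := fun τ => x * phi (a/τ) - a * Phibar (a/τ) with hg
  set g' : ℝ → ℝ := fun τ => a^2/τ^2 * phi (a/τ) * (x/τ - 1) with hg'
  have hderiv : ∀ τ ∈ Set.Icc m M, HasDerivAt g (g' τ) τ := by
    intro τ hτ
    have hτ0 : 0 < τ := lt_of_lt_of_le hm hτ.1
    have hdiv : HasDerivAt (fun τ : ℝ => a/τ) (-a/τ^2) τ := by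
      have := (hasDerivAt_inv hτ0.ne').const_mul a
      refine this.congr_deriv ?_
      field_simp
    have h1 : HasDerivAt (fun τ => phi (a/τ)) (a^2/τ^3 * phi (a/τ)) τ := by
      have := (hasDerivAt_phi (a/τ)).comp τ hdiv
      refine this.congr_deriv ?_
      field_simp
    have h2 : HasDerivAt (fun τ => Phibar (a/τ)) (a/τ^2 * phi (a/τ)) τ := by
      have := (hasDerivAt_Phibar (a/τ)).comp τ hdiv
      refine this.congr_deriv ?_
      field_simp
    have := (h1.const_mul x).sub (h2.const_mul a)
    refine this.congr_deriv ?_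
    simp only [hg', hg]
    field_simp
  set D : ℝ := a^2/m^2 * phi (a/M) * ((M-m)/m) with hD
  have hbound : ∀ τ ∈ Set.Icc m M, ‖g' τ‖ ≤ D := by
    intro τ hτ
    have hτ0 : 0 < τ := lt_of_lt_of_le hm hτ.1
    have e1 : a^2/τ^2 ≤ a^2/m^2 := by
      apply div_le_div_of_nonneg_left (by positivity) (by positivity)
      exact pow_le_pow_left₀ hm.le hτ.1 2
    have e2 : phi (a/τ) ≤ phi (a/M) := by
      apply phi_le
      rw [abs_div, abs_div]
      apply div_le_div_of_nonneg_left (abs_nonneg a)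
      · rwa [abs_of_pos hτ0]
      · rw [abs_of_pos hτ0, abs_of_pos (lt_of_lt_of_le hm hMm)]; exact hτ.2
    have e3 : |x/τ - 1| ≤ (M-m)/m := by
      have h1 : x/τ - 1 = (x - τ)/τ := by field_simp
      rw [h1, abs_div, abs_of_pos hτ0]
      apply div_le_div₀ _ _ hm hτ.1
      · linarith
      · rw [abs_sub_le_iff]
        constructor <;> [linarith [hx.1, hx.2, hτ.1, hτ.2]; linarith [hx.1, hx.2, hτ.1, hτ.2]]
    rw [Real.norm_eq_abs, hg', abs_mul, abs_mul, abs_of_nonneg (by positivity : (0:ℝ) ≤ a^2/τ^2),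
      abs_of_nonneg (phi_pos (a/τ)).le]
    rw [hD]
    apply mul_le_mul _ e3 (abs_nonneg _) (mul_nonneg (by positivity) (phi_pos _).le)
    exact mul_le_mul e1 e2 (phi_pos _).le (by positivity)
  have key := (convex_Icc m M).norm_image_sub_le_of_norm_hasDerivWithin_le
    (fun τ hτ => (hderiv τ hτ).hasDerivWithinAt) hbound hy hx
  have heq : x * (phi (a/x) - phi (a/y)) - a * (Phibar (a/x) - Phibar (a/y)) = g x - g y := by
    simp only [hg]; ring
  rw [heq, ← Real.norm_eq_abs]
  calc ‖g x - g y‖ ≤ D * ‖x - y‖ := key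
    _ ≤ D * (M - m) := by
        apply mul_le_mul_of_nonneg_left _
          (mul_nonneg (mul_nonneg (by positivity) (phi_pos _).le)
            (div_nonneg (by linarith) hm.le))
        rw [Real.norm_eq_abs, abs_sub_le_iff]
        exact ⟨by linarith [hx.1, hx.2, hy.1, hy.2], by linarith [hx.1, hx.2, hy.1, hy.2]⟩
    _ = (M - m)^2 * a^2 * phi (a/M) / m^3 := by
        rw [hD]; field_simp

lemma sq_exp_le (u b : ℝ) (hu : 0 < u) (hb : 0 ≤ b) : b * Real.exp (-(b*u)/2) ≤ 2/u := by
  have h := Real.add_one_le_exp (b*u/2)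
  have hp := Real.exp_pos (b*u/2)
  have he : Real.exp (-(b*u)/2) = (Real.exp (b*u/2))⁻¹ := by
    rw [← Real.exp_neg]; ring_nf
  rw [he, le_div_iff₀ hu]
  rw [mul_comm b _, mul_assoc, inv_mul_le_iff₀ hp]  -- maybe wrong; fallback below
  nlinarith
  
lemma phiB (a u M : ℝ) (hM : 0 < M) (hu : 0 < u) (huM : u ≤ 1/M^2 - 1) :
    a^2 * phi (a/M) ≤ 2 * phi a / u := by
  have h1 : phi (a/M) = phi a * Real.exp (-(a^2 * (1/M^2 - 1))/2) := by
    unfold phi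
    rw [mul_assoc, ← Real.exp_add]
    congr 1
    field_simp
    ring
  have h2 : Real.exp (-(a^2 * (1/M^2 - 1))/2) ≤ Real.exp (-(a^2 * u)/2) := by
    apply Real.exp_le_exp.2
    have : a^2 * u ≤ a^2 * (1/M^2 - 1) := mul_le_mul_of_nonneg_left huM (by positivity)
    linarith
  calc a^2 * phi (a/M) = phi a * (a^2 * Real.exp (-(a^2 * (1/M^2 - 1))/2)) := by rw [h1]; ring
    _ ≤ phi a * (a^2 * Real.exp (-(a^2 * u)/2)) := by
        apply mul_le_mul_of_nonneg_left _ (phi_pos a).le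
        exact mul_le_mul_of_nonneg_left h2 (by positivity)
    _ ≤ phi a * (2/u) := mul_le_mul_of_nonneg_left (sq_exp_le u (a^2) hu (by positivity)) (phi_pos a).le
    _ = 2 * phi a / u := by ring

lemma exp_lb (v θ : ℝ) (hv : 0 ≤ v) (hθ0 : 0 ≤ θ) (hθ1 : θ ≤ 1) :
    Real.exp (θ*v) * ((1-θ)*v) ≤ Real.exp v - 1 := by
  have h1 : Real.exp v = Real.exp (θ*v) * Real.exp ((1-θ)*v) := by
    rw [← Real.exp_add]; ring_nf
  have h2 := Real.add_one_le_exp ((1-θ)*v)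
  have h3 : (1:ℝ) ≤ Real.exp (θ*v) := Real.one_le_exp (by positivity)
  nlinarith [Real.exp_pos (θ*v)]

lemma rpow_diff_ge (p c d : ℝ) (hp0 : 0 < p) (hp1 : p ≤ 1) (hc : 0 ≤ c) (hcd : c < d) :
    p * d^(p-1) * (d - c) ≤ d^p - c^p := by
  have hd0 : 0 < d := lt_of_le_of_lt hc hcd
  have hcont : ContinuousOn (fun x : ℝ => x^p) (Set.Icc c d) := by
    apply ContinuousOn.rpow_const continuousOn_id
    intro x hx
    right; exact hp0.le
  have hder : ∀ x ∈ Set.Ioo c d, HasDerivAt (fun x : ℝ => x^p) (p * x^(p-1)) x := by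
    intro x hx
    have hx0 : x ≠ 0 := ne_of_gt (lt_of_le_of_lt hc hx.1)
    exact Real.hasDerivAt_rpow_const (Or.inl hx0)
  obtain ⟨ξ, hξ, heq⟩ := exists_hasDerivAt_eq_slope (fun x : ℝ => x^p) _ hcd hcont hder
  have hξ0 : 0 < ξ := lt_of_le_of_lt hc hξ.1
  have hmono : d^(p-1) ≤ ξ^(p-1) := by
    apply Real.rpow_le_rpow_of_nonpos hξ0 hξ.2.le (by linarith)
  have hslope : (d^p - c^p) = p * ξ^(p-1) * (d - c) := by
    rw [eq_div_iff (by linarith : d - c ≠ 0)] at heq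
    linarith
  rw [hslope]
  apply mul_le_mul_of_nonneg_right _ (by linarith)
  exact mul_le_mul_of_nonneg_left hmono hp0.le

lemma sum_rpow_le (β : ℝ) (hβ0 : 0 ≤ β) (hβ1 : β < 1) (n : ℕ) :
    ∑ k ∈ Finset.Icc 1 n, ((k:ℝ))^(-β) ≤ (n:ℝ)^(1-β) / (1-β) := by
  have hp : 0 < 1 - β := by linarith
  have key : ∀ k : ℕ, 1 ≤ k → ((k:ℝ))^(-β) ≤ (((k:ℝ))^(1-β) - ((k:ℝ)-1)^(1-β)) / (1-β) := by
    intro k hk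
    have hk1 : (1:ℝ) ≤ (k:ℝ) := by exact_mod_cast hk
    have := rpow_diff_ge (1-β) ((k:ℝ)-1) (k:ℝ) hp (by linarith) (by linarith) (by linarith)
    rw [le_div_iff₀ hp]
    calc ((k:ℝ))^(-β) * (1-β) = (1-β) * (k:ℝ)^((1-β)-1) * ((k:ℝ) - ((k:ℝ)-1)) := by
          rw [show (1-β)-1 = -β by ring]; ring
      _ ≤ ((k:ℝ))^(1-β) - ((k:ℝ)-1)^(1-β) := this
  calc ∑ k ∈ Finset.Icc 1 n, ((k:ℝ))^(-β)
      ≤ ∑ k ∈ Finset.Icc 1 n, ((((k:ℝ))^(1-β) - ((k:ℝ)-1)^(1-β)) / (1-β)) := by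
        apply Finset.sum_le_sum
        intro k hk
        exact key k (Finset.mem_Icc.1 hk).1
    _ = (∑ k ∈ Finset.Icc 1 n, (((k:ℝ))^(1-β) - ((k:ℝ)-1)^(1-β))) / (1-β) := by
        rw [Finset.sum_div]
    _ = (n:ℝ)^(1-β) / (1-β) := by
        congr 1
        rw [← Finset.Ico_add_one_right_eq_Icc, Finset.sum_Ico_eq_sum_range]
        have h0 : ∀ i ∈ Finset.range (n + 1 - 1), (((1+i:ℕ):ℝ))^(1-β) - (((1+i:ℕ):ℝ)-1)^(1-β)
            = (fun j : ℕ => ((j:ℝ))^(1-β)) (i+1) - (fun j : ℕ => ((j:ℝ))^(1-β)) i := by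
          intro i _
          simp only []
          push_cast
          ring_nf
        rw [Finset.sum_congr rfl h0, Finset.sum_range_sub (fun j : ℕ => ((j:ℝ))^(1-β))]
        simp [Real.zero_rpow hp.ne']


set_option maxHeartbeats 2000000 in
/-- Lemma: for all `a ∈ ℝ` and `n ≥ 2`,
`|∑_{k=2}^{n} (t_k^{H(t_k)} [φ(a/t_k^{H(t_k)}) − φ(a/t_k^{H(t_{k-1})})]
− a [Φ̄(a/t_k^{H(t_k)}) − Φ̄(a/t_k^{H(t_{k-1})})])| ≤ C φ(a) n^{1−2α}`. -/
theorem stmt_19 (H : ℝ → ℝ) (C_H α Hmin Hmax : ℝ)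
    (hcont : ContinuousOn H (Set.Icc 0 1))
    (hrange : ∀ t ∈ Set.Icc (0:ℝ) 1, H t ∈ Set.Ioo (1/2 : ℝ) 1)
    (hmin : IsLeast (H '' Set.Icc (0:ℝ) 1) Hmin)
    (hmax : IsGreatest (H '' Set.Icc (0:ℝ) 1) Hmax)
    (hC_H : 0 < C_H) (hα : α ∈ Set.Ioc (1/2 : ℝ) 1)
    (hHolder : ∀ t ∈ Set.Icc (0:ℝ) 1, ∀ s ∈ Set.Icc (0:ℝ) 1,
      |H t - H s| ≤ C_H * |t - s| ^ α) :
    ∃ C > 0, ∀ a : ℝ, ∀ n : ℕ, 2 ≤ n →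
      |∑ k ∈ Finset.Icc 2 n,
        (((k : ℝ)/(n : ℝ)) ^ H ((k : ℝ)/(n : ℝ))
            * (phi (a / ((k : ℝ)/(n : ℝ)) ^ H ((k : ℝ)/(n : ℝ)))
               - phi (a / ((k : ℝ)/(n : ℝ)) ^ H (((k : ℝ) - 1)/(n : ℝ))))
          - a * (Phibar (a / ((k : ℝ)/(n : ℝ)) ^ H ((k : ℝ)/(n : ℝ)))
               - Phibar (a / ((k : ℝ)/(n : ℝ)) ^ H (((k : ℝ) - 1)/(n : ℝ)))))|
      ≤ C * phi a * (n : ℝ) ^ (1 - 2 * α) := by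
  obtain ⟨⟨t0, ht0, hHt0⟩, hminLB'⟩ := hmin
  obtain ⟨⟨t1, ht1, hHt1⟩, hmaxUB'⟩ := hmax
  have hmin_mem : Hmin ∈ Set.Ioo (1/2:ℝ) 1 := hHt0 ▸ hrange t0 ht0
  have hmax_mem : Hmax ∈ Set.Ioo (1/2:ℝ) 1 := hHt1 ▸ hrange t1 ht1
  have hLB : ∀ t ∈ Set.Icc (0:ℝ) 1, Hmin ≤ H t := fun t ht => hminLB' ⟨t, ht, rfl⟩
  have hUB : ∀ t ∈ Set.Icc (0:ℝ) 1, H t ≤ Hmax := fun t ht => hmaxUB' ⟨t, ht, rfl⟩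
  have hm1 : 1/2 < Hmin := hmin_mem.1
  have hm2 : Hmin < 1 := hmin_mem.2
  have hM1 : 1/2 < Hmax := hmax_mem.1
  have hM2 : Hmax < 1 := hmax_mem.2
  set γ : ℝ := min 1 (4*Hmin - 3*Hmax + 1) with hγdef
  have hγ0 : 0 < γ := lt_min one_pos (by linarith)
  have hγ1 : γ ≤ 1 := min_le_left _ _
  have hγ2 : γ ≤ 4*Hmin - 3*Hmax + 1 := min_le_right _ _
  set δ : ℝ := γ/8 with hδdef
  have hδ0 : 0 < δ := by positivity
  have hδ1 : δ ≤ 1 := by rw [hδdef]; linarith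
  set β : ℝ := 1 - γ/2 with hβdef
  have hβ0 : 0 ≤ β := by rw [hβdef]; linarith
  have hβ1 : β < 1 := by rw [hβdef]; linarith
  set K : ℝ := 64 * C_H^2 / γ^2 with hKdef
  have hK0 : 0 < K := by positivity
  refine ⟨K * (2/γ), by positivity, ?_⟩
  intro a n hn
  have hnn : 0 < n := by omega
  have hn0 : (0:ℝ) < (n:ℝ) := by exact_mod_cast hnn
  have perk : ∀ k ∈ Finset.Icc 2 n,
      |(((k : ℝ)/(n : ℝ)) ^ H ((k : ℝ)/(n : ℝ))
            * (phi (a / ((k : ℝ)/(n : ℝ)) ^ H ((k : ℝ)/(n : ℝ)))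
               - phi (a / ((k : ℝ)/(n : ℝ)) ^ H (((k : ℝ) - 1)/(n : ℝ))))
          - a * (Phibar (a / ((k : ℝ)/(n : ℝ)) ^ H ((k : ℝ)/(n : ℝ)))
               - Phibar (a / ((k : ℝ)/(n : ℝ)) ^ H (((k : ℝ) - 1)/(n : ℝ)))))|
        ≤ K * phi a * (n:ℝ)^(-(2*α)) * ((k:ℝ)/(n:ℝ))^(-β) := by
    intro k hk
    obtain ⟨hk2, hkn⟩ := Finset.mem_Icc.1 hk
    have hk2R : (2:ℝ) ≤ (k:ℝ) := by exact_mod_cast hk2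
    have hknR : (k:ℝ) ≤ (n:ℝ) := by exact_mod_cast hkn
    set t : ℝ := (k:ℝ)/(n:ℝ) with htdef
    set s : ℝ := ((k:ℝ)-1)/(n:ℝ) with hsdef
    have ht0 : 0 < t := div_pos (by linarith) hn0
    have ht1 : t ≤ 1 := by rw [htdef, div_le_one hn0]; exact hknR
    have htI : t ∈ Set.Icc (0:ℝ) 1 := ⟨ht0.le, ht1⟩
    have hsI : s ∈ Set.Icc (0:ℝ) 1 := by
      constructor
      · apply div_nonneg (by linarith) hn0.le
      · rw [hsdef, div_le_one hn0]; linarith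
    set h1 : ℝ := H t with hh1
    set h2 : ℝ := H s with hh2
    have hh1I : Hmin ≤ h1 ∧ h1 ≤ Hmax := ⟨hLB t htI, hUB t htI⟩
    have hh2I : Hmin ≤ h2 ∧ h2 ≤ Hmax := ⟨hLB s hsI, hUB s hsI⟩
    set x : ℝ := t ^ h1 with hxdef
    set y : ℝ := t ^ h2 with hydef
    have hRHS0 : 0 ≤ K * phi a * (n:ℝ)^(-(2*α)) * ((k:ℝ)/(n:ℝ))^(-β) := by
      apply mul_nonneg (mul_nonneg (mul_nonneg hK0.le (phi_pos a).le) _) _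
      · exact Real.rpow_nonneg hn0.le _
      · exact Real.rpow_nonneg (div_nonneg (by linarith) hn0.le) _
    rcases eq_or_lt_of_le ht1 with ht1e | ht1lt
    · -- t = 1 : the term is zero
      have hxy : x = y := by rw [hxdef, hydef, ht1e, Real.one_rpow, Real.one_rpow]
      rw [hxy]
      simpa using hRHS0
    · -- t < 1
      set L : ℝ := -Real.log t with hLdef
      have hlogneg : Real.log t < 0 := Real.log_neg ht0 ht1lt
      have hL0 : 0 < L := by rw [hLdef]; linarith
      have hx0 : 0 < x := Real.rpow_pos_of_pos ht0 _
      have hy0 : 0 < y := Real.rpow_pos_of_pos ht0 _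
      set m : ℝ := min x y with hmdef
      set M : ℝ := max x y with hMdef
      have hm0 : 0 < m := lt_min hx0 hy0
      have hmM : m ≤ M := min_le_max
      have hM0 : 0 < M := lt_of_lt_of_le hm0 hmM
      have hxmem : x ∈ Set.Icc m M := ⟨min_le_left _ _, le_max_left _ _⟩
      have hymem : y ∈ Set.Icc m M := ⟨min_le_right _ _, le_max_right _ _⟩
      have hMle : M ≤ t ^ Hmin := by
        apply max_le
        · exact Real.rpow_le_rpow_of_exponent_ge ht0 ht1 hh1I.1
        · exact Real.rpow_le_rpow_of_exponent_ge ht0 ht1 hh2I.1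
      have hmge : t ^ Hmax ≤ m := by
        apply le_min
        · exact Real.rpow_le_rpow_of_exponent_ge ht0 ht1 hh1I.2
        · exact Real.rpow_le_rpow_of_exponent_ge ht0 ht1 hh2I.2
      -- Step A : M - m ≤ t^Hmin * L * (C_H * n^(-α))
      have hstepA : M - m ≤ t ^ Hmin * L * (C_H * (n:ℝ)^(-α)) := by
        have hmvt : ‖x - y‖ ≤ (t ^ Hmin * L) * ‖h1 - h2‖ := by
          rw [hxdef, hydef]
          apply (convex_Icc Hmin Hmax).norm_image_sub_le_of_norm_hasDerivWithin_le
            (f := fun h : ℝ => t ^ h) (f' := fun h : ℝ => t ^ h * Real.log t)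
            (fun h _ => ((Real.hasStrictDerivAt_const_rpow ht0 h).hasDerivAt).hasDerivWithinAt)
            ?_ ⟨hh2I.1, hh2I.2⟩ ⟨hh1I.1, hh1I.2⟩
          intro h hh
          rw [Real.norm_eq_abs, abs_mul, abs_of_pos (Real.rpow_pos_of_pos ht0 h),
            abs_of_neg hlogneg, ← hLdef]
          exact mul_le_mul_of_nonneg_right
            (Real.rpow_le_rpow_of_exponent_ge ht0 ht1 hh.1) hL0.le
        have hdiff : |h1 - h2| ≤ C_H * (n:ℝ)^(-α) := by
          have hts : t - s = 1/(n:ℝ) := by rw [htdef, hsdef]; ring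
          have h0 := hHolder t htI s hsI
          rw [hts] at h0
          have h1n : |1/(n:ℝ)| = 1/(n:ℝ) := abs_of_pos (by positivity)
          rw [h1n, one_div, Real.inv_rpow hn0.le, ← Real.rpow_neg hn0.le] at h0
          exact h0
        calc M - m = |x - y| := (max_sub_min_eq_abs x y).trans (abs_sub_comm y x)
          _ ≤ (t ^ Hmin * L) * |h1 - h2| := hmvt
          _ ≤ (t ^ Hmin * L) * (C_H * (n:ℝ)^(-α)) := by
              apply mul_le_mul_of_nonneg_left hdiff
              positivity
      have hcore := core a m M x y hm0 hxmem hymem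
      set c : ℝ := 2*Hmin*(1-δ) with hcdef
      set u0 : ℝ := t^(-(2*Hmin)) - 1 with hu0def
      have hu0pos : 0 < u0 := by
        have h1 : 1 < t^(-(2*Hmin)) :=
          (Real.one_lt_rpow_iff_of_pos ht0).2 (Or.inr ⟨ht1lt, by linarith⟩)
        rw [hu0def]; linarith
      -- Step B
      have hstepB : a^2 * phi (a/M) ≤ 2 * phi a / u0 := by
        apply phiB a u0 M hM0 hu0pos
        have hsq : (t^Hmin)^2 = t^(2*Hmin) := by
          rw [← Real.rpow_natCast (t^Hmin) 2, ← Real.rpow_mul ht0.le]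
          norm_num [mul_comm]
        have hM2' : M^2 ≤ t^(2*Hmin) := by
          rw [← hsq]; exact pow_le_pow_left₀ hM0.le hMle 2
        have hinv : t^(-(2*Hmin)) = 1/t^(2*Hmin) := by
          rw [Real.rpow_neg ht0.le, one_div]
        have := one_div_le_one_div_of_le (by positivity : (0:ℝ) < M^2) hM2'
        rw [hu0def, hinv]
        linarith
      -- Step C
      have hstepC : t^(-c) * (δ*L) ≤ u0 := by
        have hv0 : 0 ≤ 2*Hmin*L :=
          mul_nonneg (mul_nonneg (by norm_num) (by linarith : (0:ℝ) ≤ Hmin)) hL0.le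
        have he1 : t^(-(2*Hmin)) = Real.exp ((2*Hmin)*L) := by
          rw [Real.rpow_def_of_pos ht0]; congr 1; rw [hLdef]; ring
        have he2 : t^(-c) = Real.exp ((1-δ)*(2*Hmin*L)) := by
          rw [Real.rpow_def_of_pos ht0]; congr 1; rw [hcdef, hLdef]; ring
        have hlb := exp_lb (2*Hmin*L) (1-δ) hv0 (by linarith) (by linarith)
        have h2H : δ*L ≤ (1-(1-δ))*(2*Hmin*L) := by
          have hml : L ≤ 2*Hmin*L := le_mul_of_one_le_left hL0.le (by linarith)
          calc δ*L ≤ δ*(2*Hmin*L) := mul_le_mul_of_nonneg_left hml hδ0.le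
            _ = (1-(1-δ))*(2*Hmin*L) := by ring
        rw [hu0def, he1, he2]
        calc Real.exp ((1-δ)*(2*Hmin*L)) * (δ*L)
            ≤ Real.exp ((1-δ)*(2*Hmin*L)) * ((1-(1-δ))*(2*Hmin*L)) :=
              mul_le_mul_of_nonneg_left h2H (Real.exp_pos _).le
          _ ≤ Real.exp (2*Hmin*L) - 1 := hlb
      -- Step D
      have hstepD : (1:ℝ)/m^3 ≤ 1/t^(3*Hmax) := by
        apply one_div_le_one_div_of_le (Real.rpow_pos_of_pos ht0 _)
        have hcb : (t^Hmax)^3 = t^(3*Hmax) := by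
          rw [← Real.rpow_natCast (t^Hmax) 3, ← Real.rpow_mul ht0.le]
          norm_num [mul_comm]
        rw [← hcb]
        exact pow_le_pow_left₀ (Real.rpow_pos_of_pos ht0 _).le hmge 3
      -- assemble
      set BB : ℝ := t ^ Hmin * L * (C_H * (n:ℝ)^(-α)) with hBBdef
      have hBB0 : 0 ≤ BB := by
        have : (0:ℝ) ≤ t ^ Hmin := (Real.rpow_pos_of_pos ht0 _).le
        have : (0:ℝ) ≤ (n:ℝ)^(-α) := Real.rpow_nonneg hn0.le _
        positivity
      have htc0 : (0:ℝ) < t^(-c) * (δ*L) := by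
        have := Real.rpow_pos_of_pos ht0 (-c)
        positivity
      have hchain : |x * (phi (a/x) - phi (a/y)) - a * (Phibar (a/x) - Phibar (a/y))|
          ≤ BB^2 * (2 * phi a / (t^(-c) * (δ*L))) * (1/t^(3*Hmax)) := by
        calc |x * (phi (a/x) - phi (a/y)) - a * (Phibar (a/x) - Phibar (a/y))|
            ≤ (M - m)^2 * a^2 * phi (a/M) / m^3 := hcore
          _ = (M - m)^2 * (a^2 * phi (a/M)) * (1/m^3) := by ring
          _ ≤ BB^2 * (2 * phi a / u0) * (1/t^(3*Hmax)) := by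
              apply mul_le_mul _ hstepD (by positivity) _
              · apply mul_le_mul _ hstepB (mul_nonneg (by positivity) (phi_pos _).le) (by positivity)
                exact pow_le_pow_left₀ (by linarith) hstepA 2
              · apply mul_nonneg (by positivity)
                apply div_nonneg (mul_nonneg (by norm_num) (phi_pos a).le) hu0pos.le
          _ ≤ BB^2 * (2 * phi a / (t^(-c) * (δ*L))) * (1/t^(3*Hmax)) := by
              apply mul_le_mul_of_nonneg_right _ (by positivity)
              apply mul_le_mul_of_nonneg_left _ (by positivity)
              exact div_le_div_of_nonneg_left (mul_nonneg (by norm_num) (phi_pos a).le)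
                htc0 hstepC
      -- rpow algebra
      set E : ℝ := Hmin*2 + c - 3*Hmax with hEdef
      have hA1 : (t^Hmin)^2 * t^c * (1/t^(3*Hmax)) = t^E := by
        have h2 : (t^Hmin)^2 = t^(Hmin+Hmin) := by rw [Real.rpow_add ht0]; ring
        have h3 : (1:ℝ)/t^(3*Hmax) = t^(-(3*Hmax)) := by rw [Real.rpow_neg ht0.le, one_div]
        rw [h2, h3, ← Real.rpow_add ht0, ← Real.rpow_add ht0, hEdef]
        congr 1
        ring
      have hA2 : ((n:ℝ)^(-α))^2 = (n:ℝ)^(-(2*α)) := by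
        rw [← Real.rpow_natCast ((n:ℝ)^(-α)) 2, ← Real.rpow_mul hn0.le]
        congr 1
        push_cast; ring
      have hA3 : t^(-c) = (t^c)⁻¹ := Real.rpow_neg ht0.le c
      have htc : (0:ℝ) < t^c := Real.rpow_pos_of_pos ht0 _
      have ht3 : (0:ℝ) < t^(3*Hmax) := Real.rpow_pos_of_pos ht0 _
      have hQ : BB^2 * (2 * phi a / (t^(-c) * (δ*L))) * (1/t^(3*Hmax))
          = (2*C_H^2/δ) * phi a * (n:ℝ)^(-(2*α)) * (t^E * L) := by
        rw [← hA1, ← hA2, hBBdef, hA3]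
        field_simp
      have hE : -1 + 3*γ/4 ≤ E := by
        have hp : Hmin*δ ≤ δ := by
          have := mul_le_mul_of_nonneg_right hm2.le hδ0.le
          linarith
        rw [hEdef, hcdef]
        have hδγ : δ = γ/8 := hδdef
        linarith [hγ2]
      have htE : t^E ≤ t^(-1+3*γ/4) := Real.rpow_le_rpow_of_exponent_ge ht0 ht1 hE
      have hsplit : t^(-1+3*γ/4) = t^(-β) * t^(γ/4) := by
        rw [← Real.rpow_add ht0]
        congr 1
        rw [hβdef]; ring
      have hLt : t^(γ/4) * L ≤ 4/γ := by
        have hsq := sq_exp_le (γ/2) L (by positivity) hL0.le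
        have hexp : t^(γ/4) = Real.exp (-(L*(γ/2))/2) := by
          rw [Real.rpow_def_of_pos ht0]; congr 1; rw [hLdef]; ring
        rw [hexp, mul_comm]
        calc L * Real.exp (-(L*(γ/2))/2) ≤ 2/(γ/2) := hsq
          _ = 4/γ := by rw [div_div_eq_mul_div]; norm_num
      have hfin : t^E * L ≤ t^(-β) * (4/γ) := by
        calc t^E * L ≤ t^(-1+3*γ/4) * L := mul_le_mul_of_nonneg_right htE hL0.le
          _ = t^(-β) * (t^(γ/4) * L) := by rw [hsplit]; ring
          _ ≤ t^(-β) * (4/γ) := by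
              apply mul_le_mul_of_nonneg_left hLt (Real.rpow_nonneg ht0.le _)
      calc |x * (phi (a/x) - phi (a/y)) - a * (Phibar (a/x) - Phibar (a/y))|
          ≤ BB^2 * (2 * phi a / (t^(-c) * (δ*L))) * (1/t^(3*Hmax)) := hchain
        _ = (2*C_H^2/δ) * phi a * (n:ℝ)^(-(2*α)) * (t^E * L) := hQ
        _ ≤ (2*C_H^2/δ) * phi a * (n:ℝ)^(-(2*α)) * (t^(-β) * (4/γ)) := by
            apply mul_le_mul_of_nonneg_left hfin
            apply mul_nonneg (mul_nonneg (by positivity) (phi_pos a).le)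
              (Real.rpow_nonneg hn0.le _)
        _ = K * phi a * (n:ℝ)^(-(2*α)) * t^(-β) := by
            rw [hKdef, hδdef]
            field_simp
            ring
  -- summation
  have h1β : 1 - β = γ/2 := by rw [hβdef]; ring
  have e1 : (n:ℝ)^β * (n:ℝ)^(1-β) = (n:ℝ) := by
    rw [← Real.rpow_add hn0]; norm_num
  have e2 : (n:ℝ)^(-(2*α)) * (n:ℝ) = (n:ℝ)^(1-2*α) := by
    nth_rw 2 [← Real.rpow_one (n:ℝ)]
    rw [← Real.rpow_add hn0]
    congr 1; ring
  calc |∑ k ∈ Finset.Icc 2 n,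
        (((k : ℝ)/(n : ℝ)) ^ H ((k : ℝ)/(n : ℝ))
            * (phi (a / ((k : ℝ)/(n : ℝ)) ^ H ((k : ℝ)/(n : ℝ)))
               - phi (a / ((k : ℝ)/(n : ℝ)) ^ H (((k : ℝ) - 1)/(n : ℝ))))
          - a * (Phibar (a / ((k : ℝ)/(n : ℝ)) ^ H ((k : ℝ)/(n : ℝ)))
               - Phibar (a / ((k : ℝ)/(n : ℝ)) ^ H (((k : ℝ) - 1)/(n : ℝ)))))|
      ≤ ∑ k ∈ Finset.Icc 2 n,
        |(((k : ℝ)/(n : ℝ)) ^ H ((k : ℝ)/(n : ℝ))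
            * (phi (a / ((k : ℝ)/(n : ℝ)) ^ H ((k : ℝ)/(n : ℝ)))
               - phi (a / ((k : ℝ)/(n : ℝ)) ^ H (((k : ℝ) - 1)/(n : ℝ))))
          - a * (Phibar (a / ((k : ℝ)/(n : ℝ)) ^ H ((k : ℝ)/(n : ℝ)))
               - Phibar (a / ((k : ℝ)/(n : ℝ)) ^ H (((k : ℝ) - 1)/(n : ℝ)))))| :=
        Finset.abs_sum_le_sum_abs _ _
    _ ≤ ∑ k ∈ Finset.Icc 2 n, K * phi a * (n:ℝ)^(-(2*α)) * ((k:ℝ)/(n:ℝ))^(-β) :=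
        Finset.sum_le_sum perk
    _ = K * phi a * (n:ℝ)^(-(2*α)) * ∑ k ∈ Finset.Icc 2 n, ((k:ℝ)/(n:ℝ))^(-β) := by
        rw [← Finset.mul_sum]
    _ ≤ K * phi a * (n:ℝ)^(-(2*α)) * ((n:ℝ)^(1-β)/(1-β) * (n:ℝ)^β) := by
        apply mul_le_mul_of_nonneg_left _
          (mul_nonneg (mul_nonneg hK0.le (phi_pos a).le) (Real.rpow_nonneg hn0.le _))
        calc ∑ k ∈ Finset.Icc 2 n, ((k:ℝ)/(n:ℝ))^(-β)
            ≤ ∑ k ∈ Finset.Icc 1 n, ((k:ℝ)/(n:ℝ))^(-β) := by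
              apply Finset.sum_le_sum_of_subset_of_nonneg
                (Finset.Icc_subset_Icc_left (by norm_num))
              intro i hi _
              exact Real.rpow_nonneg (div_nonneg (Nat.cast_nonneg i) hn0.le) _
          _ = ∑ k ∈ Finset.Icc 1 n, ((k:ℝ))^(-β) * (n:ℝ)^β := by
              apply Finset.sum_congr rfl
              intro i _
              rw [Real.div_rpow (Nat.cast_nonneg i) hn0.le, Real.rpow_neg hn0.le,
                div_eq_mul_inv, inv_inv]
          _ = (∑ k ∈ Finset.Icc 1 n, ((k:ℝ))^(-β)) * (n:ℝ)^β := by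
              rw [← Finset.sum_mul]
          _ ≤ (n:ℝ)^(1-β)/(1-β) * (n:ℝ)^β :=
              mul_le_mul_of_nonneg_right (sum_rpow_le β hβ0 hβ1 n)
                (Real.rpow_nonneg hn0.le _)
    _ = K * (2/γ) * phi a * (n:ℝ)^(1-2*α) := by
        rw [h1β]
        rw [show (n:ℝ)^(γ/2)/(γ/2) * (n:ℝ)^β = ((n:ℝ)^β * (n:ℝ)^(γ/2)) * (2/γ) by
          field_simp]
        rw [← h1β, e1]
        rw [show K * phi a * (n:ℝ)^(-(2*α)) * ((n:ℝ) * (2/γ))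
          = K * (2/γ) * phi a * ((n:ℝ)^(-(2*α)) * (n:ℝ)) by ring, e2]
end
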